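/- Let n ≥ 2 and 1 ≤ k ≤ n−1, and let u¹,…,uᵐ ∈ ℝⁿ (unit vectors) together with weights λ₁,…,λₘ > 0 form a John decomposition. Let v¹,…,vᵏ ∈ ℝⁿ be orthonormal with linear span F, let c ∈ F and α₁,…,α_k > 0, and let E be the k-ellipsoid with axis directions v¹,…,vᵏ, center c and semi-axes α₁,…,α_k. If the orthogonal projection of uᵢ onto F lies in E for every i ∈ {1,…,m}, then ∏ⱼ αⱼ ≥ (k/n)^{k/2}, with equality if and only if c = 0 and αⱼ = √(k/n) for every j ∈ {1,…,k}. -/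

import Mathlib

open scoped InnerProductSpace BigOperators

lemma my_amgm (k : ℕ) (hk : 1 ≤ k) (β : Fin k → ℝ) (hβ : ∀ j, 0 < β j) :
    ∑ j, Real.log (β j) ≤ k * Real.log ((∑ j, β j) / k) ∧
    (∑ j, Real.log (β j) = k * Real.log ((∑ j, β j) / k) → ∀ j j', β j = β j') := by
  have hk0 : (0:ℝ) < k := by positivity
  have hw1 : ∑ _j : Fin k, (k:ℝ)⁻¹ = 1 := by
    rw [Finset.sum_const, Finset.card_univ, Fintype.card_fin, nsmul_eq_mul]
    field_simp
  have hmem : ∀ j ∈ Finset.univ, β j ∈ Set.Ioi (0:ℝ) := fun j _ => hβ j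
  have hmean : ∑ j, (k:ℝ)⁻¹ • β j = (∑ j, β j) / k := by
    simp [smul_eq_mul, ← Finset.sum_div, ← Finset.mul_sum, div_eq_inv_mul]
  have hjen : ∑ j, (k:ℝ)⁻¹ • Real.log (β j) ≤ Real.log (∑ j, (k:ℝ)⁻¹ • β j) :=
    (strictConcaveOn_log_Ioi.concaveOn).le_map_sum (fun j _ => by positivity) hw1 hmem
  rw [hmean] at hjen
  have hjen' : ∑ j, Real.log (β j) ≤ k * Real.log ((∑ j, β j) / k) := by
    have := mul_le_mul_of_nonneg_left hjen hk0.le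
    rw [Finset.mul_sum] at this
    simpa [smul_eq_mul, ← mul_assoc, mul_inv_cancel₀ hk0.ne'] using this
  refine ⟨hjen', fun heq j j' => ?_⟩
  have heq2 : Real.log (∑ j, (k:ℝ)⁻¹ • β j) ≤ ∑ j, (k:ℝ)⁻¹ • Real.log (β j) := by
    rw [hmean]
    have h : ∑ j, (k:ℝ)⁻¹ • Real.log (β j) = (k:ℝ)⁻¹ * ∑ j, Real.log (β j) := by
      simp [smul_eq_mul, Finset.mul_sum]
    rw [h, heq, ← mul_assoc, inv_mul_cancel₀ hk0.ne', one_mul]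
  exact strictConcaveOn_log_Ioi.eq_of_map_sum_eq (fun j _ => by positivity) hw1 hmem heq2
    (Finset.mem_univ j) (Finset.mem_univ j')

set_option maxHeartbeats 1600000 in
/-- Lemma on minimal ellipsoids containing projections of a John
decomposition. -/
theorem stmt1 (n k : ℕ) (hn : 2 ≤ n) (hk : 1 ≤ k) (hkn : k ≤ n - 1)
    (m : ℕ) (u : Fin m → EuclideanSpace ℝ (Fin n)) (lam : Fin m → ℝ)
    (hu : ∀ i, ‖u i‖ = 1) (hlam : ∀ i, 0 < lam i)
    (hsum : ∑ i, lam i • u i = 0)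
    (hdecomp : ∀ x : EuclideanSpace ℝ (Fin n), ∑ i, (lam i * ⟪u i, x⟫_ℝ) • u i = x)
    (v : Fin k → EuclideanSpace ℝ (Fin n)) (hv : Orthonormal ℝ v)
    (c : EuclideanSpace ℝ (Fin n)) (hc : c ∈ Submodule.span ℝ (Set.range v))
    (α : Fin k → ℝ) (hα : ∀ j, 0 < α j)
    (Eell : Set (EuclideanSpace ℝ (Fin n)))
    (hEell : Eell = {x | ∃ t : Fin k → ℝ,
      ∑ j, (t j) ^ 2 / (α j) ^ 2 ≤ 1 ∧ x = c + ∑ j, t j • v j})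
    (hproj : ∀ i, (∑ j, ⟪v j, u i⟫_ℝ • v j) ∈ Eell) :
    Real.sqrt ((k : ℝ) / n) ^ k ≤ ∏ j, α j ∧
      ((∏ j, α j = Real.sqrt ((k : ℝ) / n) ^ k) ↔
        (c = 0 ∧ ∀ j, α j = Real.sqrt ((k : ℝ) / n))) := by
  -- Basic positivity facts
  have hn0 : (0:ℝ) < n := by positivity
  have hk0 : (0:ℝ) < k := by exact_mod_cast hk
  haveI : Nonempty (Fin k) := ⟨⟨0, hk⟩⟩
  -- The quadratic form identity
  have key : ∀ x y : EuclideanSpace ℝ (Fin n),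
      ∑ i, lam i * (⟪u i, x⟫_ℝ * ⟪u i, y⟫_ℝ) = ⟪x, y⟫_ℝ := by
    intro x y
    have h : ⟪∑ i, (lam i * ⟪u i, x⟫_ℝ) • u i, y⟫_ℝ = ⟪x, y⟫_ℝ := by rw [hdecomp]
    rw [sum_inner] at h
    simp_rw [real_inner_smul_left, mul_assoc] at h
    exact h
  -- Total weight equals n
  have hlamn : ∑ i, lam i = (n:ℝ) := by
    have h1 : ∀ l : Fin n, ∑ i, lam i * (u i l * u i l) = 1 := by
      intro l
      have h := key (EuclideanSpace.single l (1:ℝ)) (EuclideanSpace.single l (1:ℝ))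
      simp only [EuclideanSpace.inner_single_right, RCLike.inner_apply, map_one, one_mul,
        EuclideanSpace.single_apply, if_pos rfl] at h
      simpa using h
    have h2 : ∀ i, ∑ l, u i l * u i l = 1 := by
      intro i
      have h := real_inner_self_eq_norm_sq (u i)
      rw [hu i] at h
      rw [PiLp.inner_apply] at h
      simpa [RCLike.inner_apply, ← sq] using h.trans (by norm_num : (1:ℝ)^2 = 1)
    calc ∑ i, lam i = ∑ i, lam i * ∑ l, u i l * u i l := by simp [h2]
      _ = ∑ i, ∑ l, lam i * (u i l * u i l) := by simp [Finset.mul_sum]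
      _ = ∑ l, ∑ i, lam i * (u i l * u i l) := Finset.sum_comm
      _ = ∑ _l : Fin n, (1:ℝ) := by simp [h1]
      _ = n := by simp
  have hC : ∀ j, ∑ i, lam i * (⟪v j, u i⟫_ℝ * ⟪v j, u i⟫_ℝ) = 1 := by
    intro j
    have h := key (v j) (v j)
    have h2 : ⟪v j, v j⟫_ℝ = 1 := by
      rw [real_inner_self_eq_norm_sq, hv.1 j]; norm_num
    rw [h2] at h
    simp_rw [← real_inner_comm (u _) (v j)] at h
    exact h
  have hD : ∀ j, ∑ i, lam i * ⟪v j, u i⟫_ℝ = 0 := by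
    intro j
    have h : ⟪v j, ∑ i, lam i • u i⟫_ℝ = 0 := by rw [hsum, inner_zero_right]
    rw [inner_sum] at h
    simp_rw [real_inner_smul_right] at h
    exact h
  -- Coordinates of the center and of the projections
  set γ : Fin k → ℝ := fun j => ⟪v j, c⟫_ℝ with hγ
  set a : Fin m → Fin k → ℝ := fun i j => ⟪v j, u i⟫_ℝ with ha
  have hcdec : c = ∑ j, γ j • v j := by
    obtain ⟨g, hg⟩ := (Submodule.mem_span_range_iff_exists_fun ℝ).mp hc
    have hgj : ∀ j, γ j = g j := by
      intro j
      rw [hγ]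
      simp only [← hg]
      exact hv.inner_right_fintype g j
    rw [← hg]
    exact Finset.sum_congr rfl fun j _ => by rw [hgj j]
  have hFi : ∀ i, ∑ j, (a i j - γ j)^2 / (α j)^2 ≤ 1 := by
    intro i
    have hp := hproj i
    rw [hEell] at hp
    obtain ⟨t, ht1, ht2⟩ := hp
    have htj : ∀ j, t j = a i j - γ j := by
      intro j
      have h1 : ⟪v j, ∑ j', a i j' • v j'⟫_ℝ = a i j := hv.inner_right_fintype _ j
      have h2 : ⟪v j, c + ∑ j', t j' • v j'⟫_ℝ = γ j + t j := by
        rw [inner_add_right, hv.inner_right_fintype]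
      rw [ht2, h2] at h1
      linarith
    calc ∑ j, (a i j - γ j)^2 / (α j)^2
        = ∑ j, (t j)^2 / (α j)^2 := Finset.sum_congr rfl fun j _ => by rw [htj j]
      _ ≤ 1 := ht1
  -- Summed inequality
  have h1 : ∑ i, lam i * (∑ j, (a i j - γ j)^2/(α j)^2) ≤ (n:ℝ) := by
    rw [← hlamn]
    refine Finset.sum_le_sum fun i _ => ?_
    have := mul_le_mul_of_nonneg_left (hFi i) (hlam i).le
    simpa using this
  have h3 : ∀ j, ∑ i, lam i * (a i j - γ j)^2 = 1 + n * (γ j)^2 := by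
    intro j
    have e : ∀ i, lam i * (a i j - γ j)^2
        = lam i * (a i j * a i j) - 2 * γ j * (lam i * a i j) + (γ j)^2 * lam i := by
      intro i; ring
    rw [Finset.sum_congr rfl fun i _ => e i]
    rw [Finset.sum_add_distrib, Finset.sum_sub_distrib, ← Finset.mul_sum, ← Finset.mul_sum,
      hC j, hD j, hlamn]
    ring
  have h2 : ∑ i, lam i * (∑ j, (a i j - γ j)^2/(α j)^2)
      = ∑ j, (1 + n * (γ j)^2) / (α j)^2 := by
    calc ∑ i, lam i * (∑ j, (a i j - γ j)^2/(α j)^2)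
        = ∑ i, ∑ j, (lam i * (a i j - γ j)^2)/(α j)^2 := by
          simp_rw [Finset.mul_sum, mul_div_assoc]
      _ = ∑ j, ∑ i, (lam i * (a i j - γ j)^2)/(α j)^2 := Finset.sum_comm
      _ = ∑ j, (∑ i, lam i * (a i j - γ j)^2)/(α j)^2 := by
          simp_rw [← Finset.sum_div]
      _ = ∑ j, (1 + n * (γ j)^2) / (α j)^2 := by simp_rw [h3]
  have hkeyineq : ∑ j, (1 + n * (γ j)^2) / (α j)^2 ≤ (n:ℝ) := by
    rw [← h2]; exact h1
  -- AM-GM endgame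
  set β : Fin k → ℝ := fun j => ((α j)^2)⁻¹ with hβdef
  have hββ : ∀ j, β j = ((α j)^2)⁻¹ := fun j => rfl
  have hβ : ∀ j, 0 < β j := fun j => by rw [hββ]; exact inv_pos.mpr (pow_pos (hα j) 2)
  have hβsum : ∑ j, β j ≤ (n:ℝ) := by
    refine le_trans (Finset.sum_le_sum fun j _ => ?_) hkeyineq
    rw [hββ, inv_eq_one_div, div_le_div_iff_of_pos_right (pow_pos (hα j) 2)]
    nlinarith [sq_nonneg (γ j)]
  have hβsumpos : 0 < ∑ j, β j := Finset.sum_pos (fun j _ => hβ j) Finset.univ_nonempty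
  set P : ℝ := ∏ j, α j with hPdef
  have hP : 0 < P := Finset.prod_pos fun j _ => hα j
  set Q : ℝ := Real.sqrt ((k:ℝ)/n) ^ k with hQdef
  have hQ : 0 < Q := by rw [hQdef]; positivity
  have hQ2 : Q^2 = ((k:ℝ)/n)^k := by
    rw [hQdef, ← pow_mul, mul_comm, pow_mul, Real.sq_sqrt (by positivity)]
  have hprodβ : ∏ j, β j = (P^2)⁻¹ := by
    rw [Finset.prod_congr rfl fun j _ => hββ j, Finset.prod_inv_distrib, Finset.prod_pow,
      ← hPdef]
  obtain ⟨hA, hAeq⟩ := my_amgm k hk β hβ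
  have hBC : Real.log ((∑ j, β j)/k) ≤ Real.log ((n:ℝ)/k) := by
    rw [Real.log_le_log_iff (by positivity) (by positivity)]
    gcongr
  have hlogprod : Real.log (∏ j, β j) = ∑ j, Real.log (β j) :=
    Real.log_prod fun j _ => (hβ j).ne'
  have hprodle : ∏ j, β j ≤ ((n:ℝ)/k)^k := by
    rw [← Real.log_le_log_iff (Finset.prod_pos fun j _ => hβ j) (by positivity), hlogprod,
      Real.log_pow]
    calc ∑ j, Real.log (β j) ≤ k * Real.log ((∑ j, β j)/k) := hA
      _ ≤ k * Real.log ((n:ℝ)/k) := mul_le_mul_of_nonneg_left hBC (by positivity)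
  have hnkinv : ((n:ℝ)/k)^k = (((k:ℝ)/n)^k)⁻¹ := by
    rw [← inv_pow]
    congr 1
    field_simp
  have hQ2P2 : Q^2 ≤ P^2 := by
    have h := hprodle
    rw [hprodβ, hnkinv, ← hQ2] at h
    exact (inv_le_inv₀ (by positivity) (by positivity)).mp h
  have hmain : Q ≤ P := by nlinarith
  refine ⟨hmain, ?_, ?_⟩
  · -- equality implies c = 0 and all semi-axes equal √(k/n)
    intro hPQ
    have hP2Q2 : P^2 = Q^2 := by rw [hPQ]
    have hprodeq : ∏ j, β j = ((n:ℝ)/k)^k := by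
      rw [hprodβ, hP2Q2, hQ2, hnkinv]
    have hAC : ∑ j, Real.log (β j) = k * Real.log ((n:ℝ)/k) := by
      rw [← hlogprod, hprodeq, Real.log_pow]
    have hB : k * Real.log ((∑ j, β j)/k) ≤ k * Real.log ((n:ℝ)/k) :=
      mul_le_mul_of_nonneg_left hBC (by positivity)
    have hAB : ∑ j, Real.log (β j) = k * Real.log ((∑ j, β j)/k) := by linarith
    have hBCeq : Real.log ((∑ j, β j)/k) = Real.log ((n:ℝ)/k) := by
      have h : k * Real.log ((∑ j, β j)/k) = k * Real.log ((n:ℝ)/k) := by linarith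
      exact mul_left_cancel₀ hk0.ne' h
    have hsumeq : ∑ j, β j = (n:ℝ) := by
      have h := Real.log_injOn_pos (Set.mem_Ioi.mpr (by positivity))
        (Set.mem_Ioi.mpr (by positivity)) hBCeq
      field_simp at h
      exact h
    have hconst : ∀ j j', β j = β j' := hAeq hAB
    have hβval : ∀ j, β j = (n:ℝ)/k := by
      intro j
      have hs : ∑ j', β j' = k * β j := by
        rw [Finset.sum_congr rfl fun j' _ => hconst j' j]
        simp [Finset.card_univ, mul_comm]
      rw [hs] at hsumeq
      rw [eq_div_iff hk0.ne']
      linarith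
    have hαval : ∀ j, α j = Real.sqrt ((k:ℝ)/n) := by
      intro j
      have hne : α j ≠ 0 := (hα j).ne'
      have h1 : (α j)^2 = (k:ℝ)/n := by
        have h := hβval j
        rw [hββ] at h
        rw [eq_div_iff hn0.ne']
        field_simp at h
        linarith
      rw [← Real.sqrt_sq (hα j).le, h1]
    refine ⟨?_, hαval⟩
    -- deduce c = 0
    have hsum1 : ∑ j, ((1:ℝ))/(α j)^2 = (n:ℝ) := by
      rw [← hsumeq]
      exact Finset.sum_congr rfl fun j _ => by rw [hββ, one_div]
    have hzero : ∑ j, (n:ℝ) * (γ j)^2/(α j)^2 = 0 := by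
      have hdiff : ∑ j, ((1 + n * (γ j)^2)/(α j)^2 - 1/(α j)^2) ≤ 0 := by
        rw [Finset.sum_sub_distrib, hsum1]
        linarith
      have hre : ∀ j, (1 + (n:ℝ) * (γ j)^2)/(α j)^2 - 1/(α j)^2 = n * (γ j)^2/(α j)^2 := by
        intro j
        have : α j ≠ 0 := (hα j).ne'
        field_simp
        ring
      rw [Finset.sum_congr rfl fun j _ => hre j] at hdiff
      exact le_antisymm hdiff (Finset.sum_nonneg fun j _ => by positivity)
    have hγ0 : ∀ j, γ j = 0 := by
      intro j
      have hz := (Finset.sum_eq_zero_iff_of_nonneg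
        (fun j _ => by positivity : ∀ j ∈ Finset.univ, (0:ℝ) ≤ (n:ℝ) * (γ j)^2/(α j)^2)).mp
        hzero j (Finset.mem_univ j)
      rcases div_eq_zero_iff.mp hz with h | h
      · rcases mul_eq_zero.mp h with h' | h'
        · exact absurd h' hn0.ne'
        · exact (pow_eq_zero_iff two_ne_zero).mp h'
      · exact absurd h (pow_pos (hα j) 2).ne'
    rw [hcdec]
    simp [hγ0]
  · rintro ⟨-, hαeq⟩
    calc P = ∏ _j : Fin k, Real.sqrt ((k:ℝ)/n) :=
          Finset.prod_congr rfl fun j _ => hαeq j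
      _ = Q := by rw [Finset.prod_const, Finset.card_univ, Fintype.card_fin, hQdef]
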